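/- Let C > 0, Re > 0, Ro ∈ (0,1) with Re > C/√(Ro(1−Ro)). Then for all k₁, k₂ > 0 there exists a vector z ∈ ℝ³ with zᵀ M z < 0, where M = [[k₁C/Re, (k₂Ro − k₁(Ro−1))/2, 0], [(k₂Ro − k₁(Ro−1))/2, k₂C/Re, 0], [0, 0, k₂C/Re]]. -/

import Mathlib

open Matrix

theorem stmt_19 (C Re Ro : ℝ) (hC : 0 < C) (hRe : 0 < Re) (hRo : Ro ∈ Set.Ioo (0:ℝ) 1)
    (hthr : Re > C / Real.sqrt (Ro * (1 - Ro))) :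
    ∀ k₁ k₂ : ℝ, 0 < k₁ → 0 < k₂ →
      ∃ z : Fin 3 → ℝ,
        z ⬝ᵥ (!![k₁ * C / Re, (k₂ * Ro - k₁ * (Ro - 1)) / 2, 0;
                 (k₂ * Ro - k₁ * (Ro - 1)) / 2, k₂ * C / Re, 0;
                 0, 0, k₂ * C / Re] : Matrix (Fin 3) (Fin 3) ℝ).mulVec z < 0 := by
  obtain ⟨hRo0, hRo1⟩ := hRo
  have hs : (0:ℝ) < Ro * (1 - Ro) := by nlinarith
  have hsq : Real.sqrt (Ro * (1 - Ro)) > 0 := Real.sqrt_pos.mpr hs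
  have hC_lt : C < Re * Real.sqrt (Ro * (1 - Ro)) := by
    have := (div_lt_iff₀ hsq).mp hthr
    linarith
  have hC2 : C ^ 2 < Re ^ 2 * (Ro * (1 - Ro)) := by
    have h2 : (Re * Real.sqrt (Ro * (1 - Ro))) ^ 2 = Re ^ 2 * (Ro * (1 - Ro)) := by
      rw [mul_pow, Real.sq_sqrt hs.le]
    nlinarith [hsq, hC.le]
  intro k₁ k₂ hk₁ hk₂
  set a := k₁ * C / Re with ha
  set b := (k₂ * Ro - k₁ * (Ro - 1)) / 2 with hb
  set d := k₂ * C / Re with hd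
  have hd0 : 0 < d := by positivity
  have hkey : a * d < b ^ 2 := by
    have had : a * d = k₁ * k₂ * (C ^ 2 / Re ^ 2) := by
      field_simp [ha, hd]; rw [ha, hd]; field_simp
    have h1 : k₁ * k₂ * (C ^ 2 / Re ^ 2) < k₁ * k₂ * (Ro * (1 - Ro)) := by
      have : C ^ 2 / Re ^ 2 < Ro * (1 - Ro) := by
        rw [div_lt_iff₀ (by positivity)]; nlinarith
      exact mul_lt_mul_of_pos_left this (by positivity)
    have h2 : k₁ * k₂ * (Ro * (1 - Ro)) ≤ b ^ 2 := by
      rw [hb]; nlinarith [sq_nonneg (k₂ * Ro - k₁ * (1 - Ro))]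
    linarith [had ▸ h1]
  refine ⟨![d, -b, 0], ?_⟩
  have : (![d, -b, 0] : Fin 3 → ℝ) ⬝ᵥ (!![a, b, 0; b, d, 0; 0, 0, d] :
      Matrix (Fin 3) (Fin 3) ℝ).mulVec ![d, -b, 0] = d * (a * d - b ^ 2) := by
    simp [Matrix.mulVec, dotProduct, Fin.sum_univ_three]
    ring
  rw [this]
  nlinarith
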